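/- Let w₁ be a vertex of a digraph D lying on a cycle, and suppose w₁ has a+1 out-neighbors t₀, t₁, ..., t_a such that t_i → t_j whenever 1 ≤ i < j and t_i → t₀ for all i ≥ 1. If a(a−1)/2 ≥ t+1, then for every k ≥ 3 there exist vertices u, v and at least t+1 distinct walks of length k from u to v in D. -/

import Mathlib

/-- A walk of length `k` in the digraph with arc relation `A`,
given as its sequence of `k+1` vertices. -/
def IsWalk {V : Type*} (A : V → V → Prop) {k : ℕ} (w : Fin (k+1) → V) : Prop :=
  ∀ i : Fin k, A (w i.castSucc) (w i.succ)

/-- A walk of length `k` from `u` to `v`. -/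
def IsWalkFrom {V : Type*} (A : V → V → Prop) (k : ℕ) (u v : V) (w : Fin (k+1) → V) : Prop :=
  IsWalk A w ∧ w 0 = u ∧ w (Fin.last k) = v

/-- A (directed) cycle of length `m ≥ 1`: a closed walk whose first `m` vertices are distinct. -/
def IsCycle {V : Type*} (A : V → V → Prop) (m : ℕ) (c : Fin (m+1) → V) : Prop :=
  1 ≤ m ∧ IsWalk A c ∧ c (Fin.last m) = c 0 ∧
    Function.Injective (fun i : Fin m => c i.castSucc)

/-- There exist at least `s` pairwise distinct walks of length `k` from `u` to `v`. -/
def HasWalks {V : Type*} (A : V → V → Prop) (k s : ℕ) (u v : V) : Prop :=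
  ∃ f : Fin s → (Fin (k+1) → V), Function.Injective f ∧ ∀ i, IsWalkFrom A k u v (f i)

lemma card_pairs (a : ℕ) :
    a * (a - 1) / 2 ≤ (Finset.univ.filter
      (fun p : Fin (a+1) × Fin (a+1) => 1 ≤ (p.1 : ℕ) ∧ p.1 < p.2)).card := by
  classical
  set S := Finset.univ.filter
      (fun p : Fin (a+1) × Fin (a+1) => 1 ≤ (p.1 : ℕ) ∧ p.1 < p.2) with hSdef
  have hcard : S.card = (Finset.univ.sigma
      (fun j : Fin (a+1) => Finset.Ioo (0 : Fin (a+1)) j)).card := by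
    apply Finset.card_bij (fun p _ => (⟨p.2, p.1⟩ : Σ _ : Fin (a+1), Fin (a+1)))
    · intro p hp
      simp only [hSdef, Finset.mem_filter] at hp
      simp only [Finset.mem_sigma, Finset.mem_univ, Finset.mem_Ioo, true_and]
      exact ⟨by rw [Fin.lt_def, Fin.val_zero]; have := hp.2.1; omega, hp.2.2⟩
    · intro p hp q hq h
      simp only [Sigma.mk.inj_iff, heq_eq_eq] at h
      exact Prod.ext h.2 h.1
    · intro q hq
      simp only [Finset.mem_sigma, Finset.mem_univ, Finset.mem_Ioo, true_and] at hq
      refine ⟨(q.2, q.1), ?_, rfl⟩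
      simp only [hSdef, Finset.mem_filter, Finset.mem_univ, true_and]
      exact ⟨by have := hq.1; rw [Fin.lt_def, Fin.val_zero] at this; omega, hq.2⟩
  rw [hcard, Finset.card_sigma]
  have h1 : ∀ j : Fin (a+1), (Finset.Ioo (0 : Fin (a+1)) j).card = (j : ℕ) - 1 := by
    intro j; rw [Fin.card_Ioo]; simp
  simp_rw [h1]
  rw [Fin.sum_univ_eq_sum_range (fun x => x - 1) (a+1), Finset.sum_range_succ']
  simp only [Nat.add_sub_cancel, Nat.zero_sub, add_zero]
  rw [Finset.sum_range_id]

/-- A vertex `w₁` on a cycle with `a+1` out-neighbours `t₀,…,t_a` satisfying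
`t_i → t_j` for `1 ≤ i < j` and `t_i → t₀` for `i ≥ 1`, where `a(a-1)/2 ≥ t+1`,
forces `t+1` walks of every length `k ≥ 3` with the same endpoints. -/
theorem stmt_9 {V : Type*} (A : V → V → Prop) (t a : ℕ) (ht : 1 ≤ t) (ha : 2 ≤ a)
    (w₁ : V) (m : ℕ) (c : Fin (m+1) → V) (hc : IsCycle A m c) (hw : ∃ i, c i = w₁)
    (f : Fin (a+1) → V) (hf : Function.Injective f)
    (hout : ∀ i, A w₁ (f i))
    (hij : ∀ i j : Fin (a+1), 1 ≤ (i : ℕ) → i < j → A (f i) (f j))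
    (h0 : ∀ i : Fin (a+1), 1 ≤ (i : ℕ) → A (f i) (f 0))
    (hat : t + 1 ≤ a * (a - 1) / 2)
    (k : ℕ) (hk : 3 ≤ k) :
    ∃ u v, HasWalks A k (t+1) u v := by
  classical
  obtain ⟨hm, hcwalk, hclose, hcinj⟩ := hc
  obtain ⟨i₀, hi₀⟩ := hw
  -- the cycle as a periodic sequence
  have hmlt : ∀ n : ℕ, n % m < m + 1 := fun n => lt_of_lt_of_le (Nat.mod_lt _ hm) (Nat.le_succ m)
  set cyc : ℕ → V := fun n => c ⟨n % m, hmlt n⟩ with hcyc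
  have hstep : ∀ n : ℕ, A (cyc n) (cyc (n+1)) := by
    intro n
    have hr : n % m < m := Nat.mod_lt _ hm
    have key : (n+1) % m = (n % m + 1) % m := by
      conv_lhs => rw [← Nat.div_add_mod n m]
      rw [show m * (n/m) + n % m + 1 = (n % m + 1) + (n/m) * m by ring,
        Nat.add_mul_mod_self_right]
    have h := hcwalk ⟨n % m, hr⟩
    have h1 : (⟨n % m, hr⟩ : Fin m).castSucc = ⟨n % m, hmlt n⟩ := rfl
    rw [h1] at h
    have hsucc : c (Fin.succ ⟨n % m, hr⟩) = cyc (n + 1) := by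
      by_cases hcase : n % m + 1 < m
      · have h2 : (n + 1) % m = n % m + 1 := by rw [key, Nat.mod_eq_of_lt hcase]
        show c _ = c _
        congr 1
        apply Fin.ext
        simp [Fin.succ, h2]
      · have heq : n % m + 1 = m := by omega
        have h2 : (n + 1) % m = 0 := by rw [key, heq, Nat.mod_self]
        have h3 : (Fin.succ ⟨n % m, hr⟩ : Fin (m+1)) = Fin.last m := by
          apply Fin.ext; simp [Fin.succ, heq, Fin.last]
        rw [h3, hclose]
        show c 0 = c _
        congr 1
        apply Fin.ext
        simp [h2]
    rw [hsucc] at h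
    exact h
  -- landing on w₁
  set L : ℕ := k - 3 with hL
  have hkL : k = L + 3 := by omega
  set n₀ : ℕ := i₀.val % m + L * m with hn₀
  have hn₀w : cyc n₀ = w₁ := by
    have h1 : n₀ % m = i₀.val % m := by
      rw [hn₀, Nat.add_mul_mod_self_right, Nat.mod_mod_of_dvd _ dvd_rfl]
    by_cases hcase : i₀.val < m
    · have : (⟨n₀ % m, hmlt n₀⟩ : Fin (m+1)) = i₀ := by
        apply Fin.ext; simp [h1, Nat.mod_eq_of_lt hcase]
      show c _ = w₁
      rw [this, hi₀]
    · have hi : i₀.val = m := by omega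
      have h2 : n₀ % m = 0 := by rw [h1, hi, Nat.mod_self]
      have h3 : i₀ = Fin.last m := by apply Fin.ext; simp [hi, Fin.last]
      show c _ = w₁
      have : (⟨n₀ % m, hmlt n₀⟩ : Fin (m+1)) = 0 := by apply Fin.ext; simp [h2]
      rw [this, ← hclose, ← h3, hi₀]
  have hLn₀ : L ≤ n₀ := le_trans (Nat.le_mul_of_pos_right L hm) (Nat.le_add_left _ _)
  set s₀ : ℕ := n₀ - L with hs₀
  have hsL : s₀ + L = n₀ := by omega
  -- the pairs
  have hScard : t + 1 ≤ (Finset.univ.filter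
      (fun p : Fin (a+1) × Fin (a+1) => 1 ≤ (p.1 : ℕ) ∧ p.1 < p.2)).card :=
    le_trans hat (card_pairs a)
  obtain ⟨T, hTS, hT⟩ := Finset.exists_subset_card_eq hScard
  set e : Fin (t+1) → Fin (a+1) × Fin (a+1) :=
    fun n => ((T.equivFinOfCardEq hT).symm n : _) with he
  have heinj : Function.Injective e := fun n n' h => by
    have := Subtype.ext h
    exact (T.equivFinOfCardEq hT).symm.injective this
  have hemem : ∀ n, 1 ≤ ((e n).1 : ℕ) ∧ (e n).1 < (e n).2 := by
    intro n
    have : (e n) ∈ T := ((T.equivFinOfCardEq hT).symm n).2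
    have := hTS this
    simpa using (Finset.mem_filter.mp this).2
  -- the walks
  set g : (Fin (a+1) × Fin (a+1)) → ℕ → V := fun p x =>
    if x ≤ L then cyc (s₀ + x) else if x = L+1 then f p.1
      else if x = L+2 then f p.2 else f 0 with hg
  have gle : ∀ p x, x ≤ L → g p x = cyc (s₀ + x) := fun p x hx => if_pos hx
  have g1 : ∀ p, g p (L+1) = f p.1 := by
    intro p
    show (if L+1 ≤ L then cyc (s₀ + (L+1)) else if L+1 = L+1 then f p.1
      else if L+1 = L+2 then f p.2 else f 0) = f p.1
    rw [if_neg (by omega), if_pos rfl]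
  have g2 : ∀ p, g p (L+2) = f p.2 := by
    intro p
    show (if L+2 ≤ L then cyc (s₀ + (L+2)) else if L+2 = L+1 then f p.1
      else if L+2 = L+2 then f p.2 else f 0) = f p.2
    rw [if_neg (by omega), if_neg (by omega), if_pos rfl]
  have g3 : ∀ p, g p (L+3) = f 0 := by
    intro p
    show (if L+3 ≤ L then cyc (s₀ + (L+3)) else if L+3 = L+1 then f p.1
      else if L+3 = L+2 then f p.2 else f 0) = f 0
    rw [if_neg (by omega), if_neg (by omega), if_neg (by omega)]
  refine ⟨cyc s₀, f 0, fun n => (fun x : Fin (k+1) => g (e n) x.val), ?_, ?_⟩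
  · intro n n' h
    apply heinj
    have h1 := congrFun h ⟨L+1, by omega⟩
    have h2 := congrFun h ⟨L+2, by omega⟩
    simp only at h1 h2
    rw [g1, g1] at h1
    rw [g2, g2] at h2
    exact Prod.ext (hf h1) (hf h2)
  · intro n
    obtain ⟨he1, he2⟩ := hemem n
    refine ⟨?_, ?_, ?_⟩
    · intro s
      have hs3 : (s : ℕ) < L + 3 := by omega
      show A (g (e n) s.castSucc.val) (g (e n) s.succ.val)
      rw [Fin.coe_castSucc, Fin.val_succ]
      rcases Nat.lt_or_ge (s : ℕ) L with h1 | h1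
      · rw [gle _ _ (le_of_lt h1), gle _ _ (by omega), ← add_assoc]
        exact hstep _
      · rcases Nat.lt_or_ge (s : ℕ) (L+1) with h2 | h2
        · have hsl : (s : ℕ) = L := by omega
          rw [hsl, gle _ _ le_rfl, g1, hsL, hn₀w]
          exact hout _
        · rcases Nat.lt_or_ge (s : ℕ) (L+2) with h3 | h3
          · have hsl : (s : ℕ) = L + 1 := by omega
            rw [hsl, g1, show L + 1 + 1 = L + 2 by omega, g2]
            exact hij _ _ he1 he2
          · have hsl : (s : ℕ) = L + 2 := by omega
            rw [hsl, g2, show L + 2 + 1 = L + 3 by omega, g3]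
            refine h0 _ ?_
            have : ((e n).1 : ℕ) < ((e n).2 : ℕ) := he2
            omega
    · show g (e n) (0 : Fin (k+1)).val = cyc s₀
      rw [show ((0 : Fin (k+1)) : ℕ) = 0 from rfl, gle _ _ (Nat.zero_le _), add_zero]
    · show g (e n) (Fin.last k).val = f 0
      rw [Fin.val_last, hkL, g3]
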